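/- Let X ⊂ ℝ^d (d ≥ 1) be a compact convex set and suppose there exist x₀ ∈ X and 0 < r ≤ R with B(x₀, r) ⊆ X ⊆ B(x₀, R). Let S be the random-direction kernel S(x, A) = ∫_{S^{d-1}} ν_{x,e}(A) dσ(e). Then for every x ∈ X and every measurable A, S(x, A) ≥ θ·ν(A), where θ = r^d / (d · (R+r)^{d-1} · R) and ν is the normalized Lebesgue measure on B(x₀, r). -/

import Mathlib

open MeasureTheory

/-- The uniform probability measure `ν_{x,e}` on the chord `{x + t·e : t ∈ ℝ} ∩ X` of `X`
through `x` in direction `e` (a unit vector): the pushforward under `t ↦ x + t·e` of the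
normalized Lebesgue measure on `{t : x + t·e ∈ X}`, or the Dirac mass at `x` if the chord
is degenerate. -/
noncomputable def chordMeasure {d : ℕ} (X : Set (EuclideanSpace ℝ (Fin d)))
    (e x : EuclideanSpace ℝ (Fin d)) : Measure (EuclideanSpace ℝ (Fin d)) :=
  if volume {t : ℝ | x + t • e ∈ X} = 0 then Measure.dirac x
  else (volume {t : ℝ | x + t • e ∈ X})⁻¹ •
    Measure.map (fun t : ℝ => x + t • e) (volume.restrict {t : ℝ | x + t • e ∈ X})

/-- The uniform (rotation-invariant) probability measure `σ` on the unit sphere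
`S^{d-1} ⊂ ℝ^d`, obtained by normalizing the sphere measure induced by Lebesgue measure. -/
noncomputable def sphereUniform (d : ℕ) :
    Measure (Metric.sphere (0 : EuclideanSpace ℝ (Fin d)) 1) :=
  ((volume : Measure (EuclideanSpace ℝ (Fin d))).toSphere Set.univ)⁻¹ •
    (volume : Measure (EuclideanSpace ℝ (Fin d))).toSphere

section Aux

open Metric Set ENNReal Pointwise

/-- Polar-coordinates identity: integrating the (d-1)-power–weighted chord indicator over the
sphere measure recovers the Lebesgue measure. -/
lemma polar_identity {d : ℕ} (hd : 1 ≤ d) (x : EuclideanSpace ℝ (Fin d))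
    {A : Set (EuclideanSpace ℝ (Fin d))} (hA : MeasurableSet A) :
    ∫⁻ e : Metric.sphere (0 : EuclideanSpace ℝ (Fin d)) 1,
      ∫⁻ t in Set.Ioi (0:ℝ),
        ENNReal.ofReal (t ^ (d-1)) * A.indicator 1 (x + t • (e : EuclideanSpace ℝ (Fin d))) ∂volume
      ∂((volume : Measure (EuclideanSpace ℝ (Fin d))).toSphere)
    = volume A := by
  have hdim : Module.finrank ℝ (EuclideanSpace ℝ (Fin d)) = d := finrank_euclideanSpace_fin
  set μ : Measure (EuclideanSpace ℝ (Fin d)) := volume with hμ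
  set F : EuclideanSpace ℝ (Fin d) → ℝ≥0∞ := fun y => A.indicator 1 (x + y) with hF
  have hFm : Measurable F := by
    have h1 : Measurable (A.indicator (1 : EuclideanSpace ℝ (Fin d) → ℝ≥0∞)) :=
      measurable_one.indicator hA
    exact h1.comp (measurable_id.const_add x)
  have MP : MeasurePreserving ((homeomorphUnitSphereProd (EuclideanSpace ℝ (Fin d))).toMeasurableEquiv)
      (μ.comap (↑))
      (μ.toSphere.prod (Measure.volumeIoiPow (Module.finrank ℝ (EuclideanSpace ℝ (Fin d)) - 1))) :=
    μ.measurePreserving_homeomorphUnitSphereProd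
  have MPs := MeasurePreserving.symm _ MP
  have key : ∫⁻ p : Metric.sphere (0:EuclideanSpace ℝ (Fin d)) 1 × Set.Ioi (0:ℝ),
      F ((p.2 : ℝ) • (p.1 : EuclideanSpace ℝ (Fin d)))
        ∂(μ.toSphere.prod (Measure.volumeIoiPow (Module.finrank ℝ (EuclideanSpace ℝ (Fin d)) - 1)))
      = ∫⁻ y : ({0}ᶜ : Set (EuclideanSpace ℝ (Fin d))), F (y : EuclideanSpace ℝ (Fin d)) ∂(μ.comap (↑)) := by
    have h := MPs.lintegral_comp
      (f := fun y : ({0}ᶜ : Set (EuclideanSpace ℝ (Fin d))) => F (y : EuclideanSpace ℝ (Fin d)))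
      (hFm.comp measurable_subtype_coe)
    exact Eq.trans (by rfl) h
  have hsingleton : μ ({0} : Set (EuclideanSpace ℝ (Fin d))) = 0 := by
    have h1 : ({0} : Set (EuclideanSpace ℝ (Fin d))) ⊆ Metric.closedBall 0 0 := by simp
    refine measure_mono_null h1 ?_
    rw [Measure.addHaar_closedBall _ _ le_rfl, hdim]
    simp [zero_pow (by omega : d ≠ 0)]
  have hcomap : ∫⁻ y : ({0}ᶜ : Set (EuclideanSpace ℝ (Fin d))), F (y : EuclideanSpace ℝ (Fin d))
      ∂(μ.comap (↑)) = μ A := by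
    rw [lintegral_subtype_comap (measurableSet_singleton (0:EuclideanSpace ℝ (Fin d))).compl,
      Measure.restrict_congr_set (t := Set.univ)
        ((MeasureTheory.ae_eq_univ).mpr (by simpa using hsingleton)),
      Measure.restrict_univ]
    have h2 : ∀ y : EuclideanSpace ℝ (Fin d),
        F y = ((fun y : EuclideanSpace ℝ (Fin d) => x + y) ⁻¹' A).indicator 1 y := by
      intro y
      by_cases h : x + y ∈ A <;> simp [hF, Set.indicator_apply, h]
    have hpre : MeasurableSet ((fun y : EuclideanSpace ℝ (Fin d) => x + y) ⁻¹' A) :=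
      hA.preimage (measurable_id.const_add x)
    calc ∫⁻ y, F y ∂μ
        = ∫⁻ y, ((fun y : EuclideanSpace ℝ (Fin d) => x + y) ⁻¹' A).indicator 1 y ∂μ := by
          simp_rw [h2]
      _ = μ ((fun y : EuclideanSpace ℝ (Fin d) => x + y) ⁻¹' A) := lintegral_indicator_one hpre
      _ = μ A := measure_preimage_add μ x A
  have hprod : ∫⁻ p : Metric.sphere (0:EuclideanSpace ℝ (Fin d)) 1 × Set.Ioi (0:ℝ),
      F ((p.2 : ℝ) • (p.1 : EuclideanSpace ℝ (Fin d)))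
        ∂(μ.toSphere.prod (Measure.volumeIoiPow (Module.finrank ℝ (EuclideanSpace ℝ (Fin d)) - 1)))
      = ∫⁻ e : Metric.sphere (0:EuclideanSpace ℝ (Fin d)) 1, ∫⁻ t : Set.Ioi (0:ℝ),
          F ((t : ℝ) • (e : EuclideanSpace ℝ (Fin d)))
            ∂(Measure.volumeIoiPow (Module.finrank ℝ (EuclideanSpace ℝ (Fin d)) - 1)) ∂μ.toSphere := by
    refine lintegral_prod _ ?_
    exact (hFm.comp ((measurable_subtype_coe.comp measurable_snd).smul
      (measurable_subtype_coe.comp measurable_fst))).aemeasurable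
  have hinner : ∀ e : Metric.sphere (0:EuclideanSpace ℝ (Fin d)) 1,
      ∫⁻ t : Set.Ioi (0:ℝ), F ((t : ℝ) • (e : EuclideanSpace ℝ (Fin d)))
          ∂(Measure.volumeIoiPow (Module.finrank ℝ (EuclideanSpace ℝ (Fin d)) - 1))
      = ∫⁻ t in Set.Ioi (0:ℝ),
          ENNReal.ofReal (t ^ (d-1)) * A.indicator 1 (x + t • (e : EuclideanSpace ℝ (Fin d))) ∂volume := by
    intro e
    rw [Measure.volumeIoiPow,
      lintegral_withDensity_eq_lintegral_mul _
        (by exact (measurable_subtype_coe.pow_const _).ennreal_ofReal)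
        (by exact hFm.comp (measurable_subtype_coe.smul measurable_const) :
          Measurable fun t : Set.Ioi (0:ℝ) => F ((t:ℝ) • (e : EuclideanSpace ℝ (Fin d)))),
      hdim]
    have h3 := lintegral_subtype_comap (μ := (volume : Measure ℝ)) (s := Set.Ioi (0:ℝ))
      measurableSet_Ioi
      (fun s : ℝ => ENNReal.ofReal (s ^ (d - 1)) * F (s • (e : EuclideanSpace ℝ (Fin d))))
    exact h3
  calc ∫⁻ e : Metric.sphere (0:EuclideanSpace ℝ (Fin d)) 1,
        ∫⁻ t in Set.Ioi (0:ℝ),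
          ENNReal.ofReal (t ^ (d-1)) * A.indicator 1 (x + t • (e : EuclideanSpace ℝ (Fin d))) ∂volume
        ∂μ.toSphere
      = ∫⁻ e : Metric.sphere (0:EuclideanSpace ℝ (Fin d)) 1, ∫⁻ t : Set.Ioi (0:ℝ),
          F ((t : ℝ) • (e : EuclideanSpace ℝ (Fin d)))
            ∂(Measure.volumeIoiPow (Module.finrank ℝ (EuclideanSpace ℝ (Fin d)) - 1)) ∂μ.toSphere := by
        simp_rw [hinner]
    _ = μ A := by rw [← hprod, key, hcomap]

/-- Negation as a measurable equiv on the unit sphere. -/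
noncomputable def negSphere (d : ℕ) : Metric.sphere (0 : EuclideanSpace ℝ (Fin d)) 1 ≃ᵐ
    Metric.sphere (0 : EuclideanSpace ℝ (Fin d)) 1 where
  toEquiv := Equiv.neg _
  measurable_toFun := continuous_neg.measurable
  measurable_invFun := continuous_neg.measurable

lemma vol_neg_set {d : ℕ} (U : Set (EuclideanSpace ℝ (Fin d))) :
    volume (-U) = volume U := by
  have h : -U = (-1 : ℝ) • U := by
    rw [← Set.image_neg_eq_neg, ← Set.image_smul]
    exact Set.image_congr fun y _ => by rw [neg_one_smul]
  rw [h, Measure.addHaar_smul]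
  simp

lemma vol_neg_set_real (U : Set ℝ) : volume (-U) = volume U := by
  have h : -U = (-1 : ℝ) • U := by
    rw [← Set.image_neg_eq_neg, ← Set.image_smul]
    exact Set.image_congr fun y _ => by rw [neg_one_smul]
  rw [h, Measure.addHaar_smul]
  simp

lemma toSphere_map_neg (d : ℕ) :
    Measure.map (negSphere d) (volume : Measure (EuclideanSpace ℝ (Fin d))).toSphere
      = (volume : Measure (EuclideanSpace ℝ (Fin d))).toSphere := by
  ext s hs
  rw [Measure.map_apply (negSphere d).measurable hs,
    Measure.toSphere_apply' _ hs, Measure.toSphere_apply' _ ((negSphere d).measurable hs)]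
  have h1 : (Subtype.val '' ((negSphere d) ⁻¹' s) : Set (EuclideanSpace ℝ (Fin d)))
      = -(Subtype.val '' s) := by
    ext y
    simp only [Set.mem_image, Set.mem_preimage, Set.mem_neg]
    constructor
    · rintro ⟨e, he, rfl⟩
      exact ⟨negSphere d e, he, by simp [negSphere, Equiv.neg]⟩
    · rintro ⟨e, he, hy⟩
      refine ⟨negSphere d e, by simpa [negSphere, Equiv.neg] using he, ?_⟩
      have : (negSphere d e : EuclideanSpace ℝ (Fin d)) = -(e : EuclideanSpace ℝ (Fin d)) := rfl
      rw [this, hy, neg_neg]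
  rw [h1, Set.smul_neg, vol_neg_set]

lemma chord_lower {d : ℕ} (X : Set (EuclideanSpace ℝ (Fin d)))
    {A A' : Set (EuclideanSpace ℝ (Fin d))} (hA : MeasurableSet A)
    (hA'A : A' ⊆ A) (hA'X : A' ⊆ X)
    (x₀ x : EuclideanSpace ℝ (Fin d)) {R : ℝ}
    (hout : X ⊆ Metric.closedBall x₀ R)
    (e : Metric.sphere (0 : EuclideanSpace ℝ (Fin d)) 1) :
    (ENNReal.ofReal (2*R))⁻¹ * volume {t : ℝ | x + t • (e : EuclideanSpace ℝ (Fin d)) ∈ A'}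
      ≤ chordMeasure X (e : EuclideanSpace ℝ (Fin d)) x A := by
  set f : ℝ → EuclideanSpace ℝ (Fin d) := fun t => x + t • (e : EuclideanSpace ℝ (Fin d)) with hf
  have hfm : Measurable f := by
    have : Continuous f := continuous_const.add (continuous_id.smul continuous_const)
    exact this.measurable
  by_cases hm : volume {t : ℝ | f t ∈ A'} = 0
  · rw [hm]; simp
  have hsub : {t : ℝ | f t ∈ A'} ⊆ {t : ℝ | f t ∈ X} := fun t ht => hA'X ht
  have hL : volume {t : ℝ | f t ∈ X} ≠ 0 := fun h => hm (measure_mono_null hsub h)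
  rw [chordMeasure, if_neg hL, Measure.smul_apply, smul_eq_mul,
    Measure.map_apply hfm hA, Measure.restrict_apply (hfm hA)]
  have hdiam : volume {t : ℝ | f t ∈ X} ≤ ENNReal.ofReal (2*R) := by
    refine (Real.volume_le_diam _).trans ?_
    refine EMetric.diam_le fun a ha b hb => ?_
    rw [edist_dist]
    refine ENNReal.ofReal_le_ofReal ?_
    have hab : dist a b = dist (f a) (f b) := by
      rw [hf]
      simp only [dist_eq_norm, add_sub_add_left_eq_sub, ← sub_smul, norm_smul,
        norm_eq_of_mem_sphere e]
      simp [Real.norm_eq_abs]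
    rw [hab]
    calc dist (f a) (f b) ≤ dist (f a) x₀ + dist x₀ (f b) := dist_triangle _ _ _
      _ ≤ R + R := add_le_add (hout ha) (by rw [dist_comm]; exact hout hb)
      _ = 2*R := by ring
  refine mul_le_mul' (ENNReal.inv_le_inv.mpr hdiam) ?_
  exact measure_mono fun t ht => ⟨hA'A ht, hA'X ht⟩

lemma const_calc (d : ℕ) (hd : 1 ≤ d) {r R : ℝ} (hr : 0 < r) (hrR : r ≤ R)
    {ι : ℝ≥0∞} (hι0 : ι ≠ 0) (hιt : ι ≠ ⊤) :
    ENNReal.ofReal (r ^ d / (d * (R + r) ^ (d - 1) * R)) * (ENNReal.ofReal (r ^ d) * ι)⁻¹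
      = ((d : ℝ≥0∞) * ι)⁻¹ *
        ((ENNReal.ofReal (2 * R))⁻¹ * (2 * (ENNReal.ofReal ((R + r) ^ (d - 1)))⁻¹)) := by
  have hR : 0 < R := lt_of_lt_of_le hr hrR
  have hp : 0 < (R + r) ^ (d - 1) := pow_pos (by linarith) _
  have ha : 0 < r ^ d := pow_pos hr _
  have hdpos : 0 < (d:ℝ) := by exact_mod_cast hd
  have h2R : 0 < 2 * R := by linarith
  have hι0' : 0 < ι.toReal := ENNReal.toReal_pos hι0 hιt
  have hfin1 : ENNReal.ofReal (r ^ d / (d * (R + r) ^ (d - 1) * R))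
      * (ENNReal.ofReal (r ^ d) * ι)⁻¹ ≠ ⊤ := by
    refine ENNReal.mul_ne_top ENNReal.ofReal_ne_top (ENNReal.inv_ne_top.mpr ?_)
    exact mul_ne_zero (ENNReal.ofReal_pos.mpr ha).ne' hι0
  have hfin2 : ((d : ℝ≥0∞) * ι)⁻¹ *
      ((ENNReal.ofReal (2 * R))⁻¹ * (2 * (ENNReal.ofReal ((R + r) ^ (d - 1)))⁻¹)) ≠ ⊤ := by
    refine ENNReal.mul_ne_top (ENNReal.inv_ne_top.mpr ?_) (ENNReal.mul_ne_top
      (ENNReal.inv_ne_top.mpr (ENNReal.ofReal_pos.mpr h2R).ne')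
      (ENNReal.mul_ne_top (by simp) (ENNReal.inv_ne_top.mpr (ENNReal.ofReal_pos.mpr hp).ne')))
    exact mul_ne_zero (by exact_mod_cast (by omega : d ≠ 0)) hι0
  rw [← ENNReal.toReal_eq_toReal_iff' hfin1 hfin2]
  rw [ENNReal.toReal_mul, ENNReal.toReal_mul, ENNReal.toReal_mul, ENNReal.toReal_mul,
    ENNReal.toReal_inv, ENNReal.toReal_inv, ENNReal.toReal_inv, ENNReal.toReal_inv,
    ENNReal.toReal_mul, ENNReal.toReal_mul,
    ENNReal.toReal_ofReal (by positivity), ENNReal.toReal_ofReal ha.le,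
    ENNReal.toReal_ofReal h2R.le, ENNReal.toReal_ofReal hp.le,
    ENNReal.toReal_natCast, ENNReal.toReal_ofNat]
  field_simp

end Aux

open Metric Set ENNReal Pointwise

/-- **Minorization for the random-direction algorithm.** If `X ⊂ ℝ^d` is compact convex with
`B(x₀, r) ⊆ X ⊆ B(x₀, R)`, `0 < r ≤ R`, then the random-direction kernel
`S(x, A) = ∫_{S^{d-1}} ν_{x,e}(A) dσ(e)` satisfies `S(x, A) ≥ θ·ν(A)` for every `x ∈ X`,
where `θ = r^d / (d·(R+r)^{d-1}·R)` and `ν` is the normalized Lebesgue measure on `B(x₀, r)`. -/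
theorem random_direction_minorization
    {d : ℕ} (hd : 1 ≤ d) (X : Set (EuclideanSpace ℝ (Fin d)))
    (hXc : IsCompact X) (hXconv : Convex ℝ X)
    (x₀ : EuclideanSpace ℝ (Fin d)) (hx₀ : x₀ ∈ X)
    (r R : ℝ) (hr : 0 < r) (hrR : r ≤ R)
    (hin : Metric.closedBall x₀ r ⊆ X) (hout : X ⊆ Metric.closedBall x₀ R) :
    ∀ x ∈ X, ∀ A : Set (EuclideanSpace ℝ (Fin d)), MeasurableSet A →
      ENNReal.ofReal (r ^ d / (d * (R + r) ^ (d - 1) * R)) *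
          ((volume (Metric.closedBall x₀ r))⁻¹ •
            volume.restrict (Metric.closedBall x₀ r)) A
        ≤ ∫⁻ e : Metric.sphere (0 : EuclideanSpace ℝ (Fin d)) 1,
            chordMeasure X (↑e) x A ∂(sphereUniform d) := by
  intro x hx A hA
  have hR : 0 < R := lt_of_lt_of_le hr hrR
  have hdim : Module.finrank ℝ (EuclideanSpace ℝ (Fin d)) = d := finrank_euclideanSpace_fin
  have h2R : 0 < 2 * R := by linarith
  have hp : 0 < (R + r) ^ (d - 1) := pow_pos (by linarith) _
  set A' : Set (EuclideanSpace ℝ (Fin d)) := A ∩ Metric.closedBall x₀ r with hA'def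
  have hA'm : MeasurableSet A' := hA.inter measurableSet_closedBall
  have hA'A : A' ⊆ A := Set.inter_subset_left
  have hA'X : A' ⊆ X := fun y hy => hin hy.2
  set τ := (volume : Measure (EuclideanSpace ℝ (Fin d))).toSphere with hτ
  set ι := volume (Metric.ball (0 : EuclideanSpace ℝ (Fin d)) 1) with hιdef
  have hι0 : ι ≠ 0 := (measure_ball_pos _ _ one_pos).ne'
  have hιt : ι ≠ ⊤ := measure_ball_lt_top.ne
  have hcuniv : τ Set.univ = (d : ℝ≥0∞) * ι := by
    rw [hτ, Measure.toSphere_apply_univ, hdim]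
  have hdι0 : (d : ℝ≥0∞) * ι ≠ 0 :=
    mul_ne_zero (by exact_mod_cast (by omega : d ≠ 0)) hι0
  -- abbreviations
  set g : Metric.sphere (0 : EuclideanSpace ℝ (Fin d)) 1 → ℝ≥0∞ :=
    fun e => volume ({t : ℝ | x + t • (e : EuclideanSpace ℝ (Fin d)) ∈ A'} ∩ Set.Ioi 0) with hgdef
  set g' : Metric.sphere (0 : EuclideanSpace ℝ (Fin d)) 1 → ℝ≥0∞ :=
    fun e => volume ({t : ℝ | x + t • (e : EuclideanSpace ℝ (Fin d)) ∈ A'} ∩ Set.Iio 0) with hg'def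
  set I : Metric.sphere (0 : EuclideanSpace ℝ (Fin d)) 1 → ℝ≥0∞ :=
    fun e => ∫⁻ t in Set.Ioi (0:ℝ),
      ENNReal.ofReal (t ^ (d-1)) * A'.indicator 1 (x + t • (e : EuclideanSpace ℝ (Fin d))) ∂volume
    with hIdef
  have hTm : ∀ e : Metric.sphere (0 : EuclideanSpace ℝ (Fin d)) 1,
      MeasurableSet {t : ℝ | x + t • (e : EuclideanSpace ℝ (Fin d)) ∈ A'} := by
    intro e
    have hc : Continuous fun t : ℝ => x + t • (e : EuclideanSpace ℝ (Fin d)) :=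
      continuous_const.add (continuous_id.smul continuous_const)
    exact hA'm.preimage hc.measurable
  have hSm : MeasurableSet {p : Metric.sphere (0 : EuclideanSpace ℝ (Fin d)) 1 × ℝ |
      x + p.2 • (p.1 : EuclideanSpace ℝ (Fin d)) ∈ A'} := by
    have hc : Continuous fun p : Metric.sphere (0 : EuclideanSpace ℝ (Fin d)) 1 × ℝ =>
        x + p.2 • (p.1 : EuclideanSpace ℝ (Fin d)) :=
      continuous_const.add (continuous_snd.smul (continuous_subtype_val.comp continuous_fst))
    exact hA'm.preimage hc.measurable
  have hgm : Measurable g := by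
    have h := measurable_measure_prodMk_left
      (ν := (volume : Measure ℝ).restrict (Set.Ioi (0:ℝ))) hSm
    have heq : ∀ e : Metric.sphere (0 : EuclideanSpace ℝ (Fin d)) 1,
        ((volume : Measure ℝ).restrict (Set.Ioi (0:ℝ)))
          (Prod.mk e ⁻¹' {p : Metric.sphere (0 : EuclideanSpace ℝ (Fin d)) 1 × ℝ |
            x + p.2 • (p.1 : EuclideanSpace ℝ (Fin d)) ∈ A'}) = g e := by
      intro e
      rw [Measure.restrict_apply (hSm.preimage measurable_prodMk_left)]
      rfl
    simpa only [heq] using h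
  -- pointwise: (ofReal p)⁻¹ * I e ≤ g e
  have hIg : ∀ e : Metric.sphere (0 : EuclideanSpace ℝ (Fin d)) 1,
      (ENNReal.ofReal ((R + r) ^ (d - 1)))⁻¹ * I e ≤ g e := by
    intro e
    have hbound : I e ≤ ENNReal.ofReal ((R + r) ^ (d - 1)) * g e := by
      have hindm : Measurable fun t : ℝ =>
          ENNReal.ofReal ((R + r) ^ (d - 1)) * A'.indicator 1 (x + t • (e : EuclideanSpace ℝ (Fin d))) := by
        refine measurable_const.mul ?_
        have h1 : Measurable (A'.indicator (1 : EuclideanSpace ℝ (Fin d) → ℝ≥0∞)) :=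
          measurable_one.indicator hA'm
        exact h1.comp (continuous_const.add (continuous_id.smul continuous_const)).measurable
      have hpt : ∀ t ∈ Set.Ioi (0:ℝ),
          ENNReal.ofReal (t ^ (d-1)) * A'.indicator 1 (x + t • (e : EuclideanSpace ℝ (Fin d)))
          ≤ ENNReal.ofReal ((R + r) ^ (d - 1)) * A'.indicator 1 (x + t • (e : EuclideanSpace ℝ (Fin d))) := by
        intro t ht
        by_cases hmem : x + t • (e : EuclideanSpace ℝ (Fin d)) ∈ A'
        · have h1 : dist (x + t • (e : EuclideanSpace ℝ (Fin d))) x₀ ≤ r := hmem.2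
          have h2 : dist x x₀ ≤ R := hout hx
          have h3 : dist (x + t • (e : EuclideanSpace ℝ (Fin d))) x = t := by
            rw [dist_eq_norm]
            simp only [add_sub_cancel_left, norm_smul, norm_eq_of_mem_sphere e]
            simp [Real.norm_eq_abs, abs_of_pos (Set.mem_Ioi.mp ht)]
          have h4 : t ≤ R + r := by
            have h5 := dist_triangle (x + t • (e : EuclideanSpace ℝ (Fin d))) x₀ x
            rw [dist_comm x₀ x] at h5
            linarith [h3 ▸ (dist_triangle (x + t • (e : EuclideanSpace ℝ (Fin d))) x₀ x)]
          refine mul_le_mul_left (ENNReal.ofReal_le_ofReal ?_) _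
          exact pow_le_pow_left₀ (le_of_lt (Set.mem_Ioi.mp ht)) h4 _
        · simp [Set.indicator_of_notMem hmem]
      calc I e ≤ ∫⁻ t in Set.Ioi (0:ℝ),
            ENNReal.ofReal ((R + r) ^ (d - 1)) *
              A'.indicator 1 (x + t • (e : EuclideanSpace ℝ (Fin d))) ∂volume :=
          setLIntegral_mono hindm hpt
        _ = ENNReal.ofReal ((R + r) ^ (d - 1)) *
            ∫⁻ t in Set.Ioi (0:ℝ), A'.indicator 1 (x + t • (e : EuclideanSpace ℝ (Fin d))) ∂volume :=
          lintegral_const_mul' _ _ ENNReal.ofReal_ne_top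
        _ = ENNReal.ofReal ((R + r) ^ (d - 1)) * g e := by
          congr 1
          have h6 : ∀ t : ℝ, A'.indicator (1 : EuclideanSpace ℝ (Fin d) → ℝ≥0∞)
              (x + t • (e : EuclideanSpace ℝ (Fin d)))
              = ({t : ℝ | x + t • (e : EuclideanSpace ℝ (Fin d)) ∈ A'}).indicator 1 t := by
            intro t
            by_cases h : x + t • (e : EuclideanSpace ℝ (Fin d)) ∈ A' <;>
              simp [Set.indicator_apply, h]
          simp_rw [h6]
          rw [lintegral_indicator_one (hTm e), Measure.restrict_apply (hTm e)]
    calc (ENNReal.ofReal ((R + r) ^ (d - 1)))⁻¹ * I e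
        ≤ (ENNReal.ofReal ((R + r) ^ (d - 1)))⁻¹ * (ENNReal.ofReal ((R + r) ^ (d - 1)) * g e) :=
          mul_le_mul_right hbound _
      _ = g e := by
          rw [← mul_assoc, ENNReal.inv_mul_cancel (ENNReal.ofReal_pos.mpr hp).ne'
            ENNReal.ofReal_ne_top, one_mul]
  -- symmetry: ∫ g' = ∫ g
  have hsymm : ∫⁻ e, g' e ∂τ = ∫⁻ e, g e ∂τ := by
    have hpt : ∀ e : Metric.sphere (0 : EuclideanSpace ℝ (Fin d)) 1,
        g' e = g (negSphere d e) := by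
      intro e
      have hco : ((negSphere d e : Metric.sphere (0 : EuclideanSpace ℝ (Fin d)) 1) :
          EuclideanSpace ℝ (Fin d)) = -(e : EuclideanSpace ℝ (Fin d)) := rfl
      have hrw : ∀ t : ℝ, (-t) • (-(e : EuclideanSpace ℝ (Fin d))) = t • (e : EuclideanSpace ℝ (Fin d)) := by
        intro t; rw [neg_smul, smul_neg, neg_neg]
      have hset : {t : ℝ | x + t • (e : EuclideanSpace ℝ (Fin d)) ∈ A'} ∩ Set.Iio 0
          = (fun s : ℝ => -s) ⁻¹'
            ({t : ℝ | x + t • (-(e : EuclideanSpace ℝ (Fin d))) ∈ A'} ∩ Set.Ioi 0) := by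
        ext t
        simp only [Set.mem_inter_iff, Set.mem_setOf_eq, Set.mem_preimage, Set.mem_Ioi,
          Set.mem_Iio, hrw]
        constructor
        · rintro ⟨h1, h2⟩; exact ⟨h1, by linarith⟩
        · rintro ⟨h1, h2⟩; exact ⟨h1, by linarith⟩
      have hpre : (fun s : ℝ => -s) ⁻¹'
          ({t : ℝ | x + t • (-(e : EuclideanSpace ℝ (Fin d))) ∈ A'} ∩ Set.Ioi 0)
          = -({t : ℝ | x + t • (-(e : EuclideanSpace ℝ (Fin d))) ∈ A'} ∩ Set.Ioi 0) := rfl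
      rw [hg'def]
      simp only
      rw [hset, hpre, vol_neg_set_real, hgdef]
      simp only [hco]
    calc ∫⁻ e, g' e ∂τ = ∫⁻ e, g (negSphere d e) ∂τ := by simp_rw [hpt]
      _ = ∫⁻ e, g e ∂(Measure.map (negSphere d) τ) := (lintegral_map_equiv g (negSphere d)).symm
      _ = ∫⁻ e, g e ∂τ := by rw [hτ, toSphere_map_neg]
  -- additivity: g e + g' e ≤ volume of full chord preimage
  have hadd : ∀ e : Metric.sphere (0 : EuclideanSpace ℝ (Fin d)) 1,
      g e + g' e ≤ volume {t : ℝ | x + t • (e : EuclideanSpace ℝ (Fin d)) ∈ A'} := by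
    intro e
    have hdisj : Disjoint ({t : ℝ | x + t • (e : EuclideanSpace ℝ (Fin d)) ∈ A'} ∩ Set.Ioi 0)
        ({t : ℝ | x + t • (e : EuclideanSpace ℝ (Fin d)) ∈ A'} ∩ Set.Iio 0) := by
      refine Set.disjoint_left.mpr fun t h1 h2 => ?_
      have h3 : (0:ℝ) < t := h1.2
      have h4 : t < 0 := h2.2
      linarith
    have := measure_union (μ := (volume : Measure ℝ)) hdisj ((hTm e).inter measurableSet_Iio)
    calc g e + g' e
        = volume (({t : ℝ | x + t • (e : EuclideanSpace ℝ (Fin d)) ∈ A'} ∩ Set.Ioi 0)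
          ∪ ({t : ℝ | x + t • (e : EuclideanSpace ℝ (Fin d)) ∈ A'} ∩ Set.Iio 0)) := this.symm
      _ ≤ volume {t : ℝ | x + t • (e : EuclideanSpace ℝ (Fin d)) ∈ A'} := by
          refine measure_mono ?_
          rintro t (ht | ht) <;> exact ht.1
  -- main chain
  have hpolar : ∫⁻ e, I e ∂τ = volume A' := polar_identity hd x hA'm
  have hinvp_ne_top : (ENNReal.ofReal ((R + r) ^ (d - 1)))⁻¹ ≠ ⊤ :=
    ENNReal.inv_ne_top.mpr (ENNReal.ofReal_pos.mpr hp).ne'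
  have hinv2R_ne_top : (ENNReal.ofReal (2 * R))⁻¹ ≠ ⊤ :=
    ENNReal.inv_ne_top.mpr (ENNReal.ofReal_pos.mpr h2R).ne'
  have hstep1 : (ENNReal.ofReal ((R + r) ^ (d - 1)))⁻¹ * volume A' ≤ ∫⁻ e, g e ∂τ := by
    calc (ENNReal.ofReal ((R + r) ^ (d - 1)))⁻¹ * volume A'
        = (ENNReal.ofReal ((R + r) ^ (d - 1)))⁻¹ * ∫⁻ e, I e ∂τ := by rw [hpolar]
      _ = ∫⁻ e, (ENNReal.ofReal ((R + r) ^ (d - 1)))⁻¹ * I e ∂τ :=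
          (lintegral_const_mul' _ _ hinvp_ne_top).symm
      _ ≤ ∫⁻ e, g e ∂τ := lintegral_mono hIg
  have hstep2 : 2 * ∫⁻ e, g e ∂τ
      ≤ ∫⁻ e, volume {t : ℝ | x + t • (e : EuclideanSpace ℝ (Fin d)) ∈ A'} ∂τ := by
    calc 2 * ∫⁻ e, g e ∂τ = ∫⁻ e, g e ∂τ + ∫⁻ e, g' e ∂τ := by rw [hsymm, two_mul]
      _ = ∫⁻ e, (g e + g' e) ∂τ := (lintegral_add_left hgm g').symm
      _ ≤ ∫⁻ e, volume {t : ℝ | x + t • (e : EuclideanSpace ℝ (Fin d)) ∈ A'} ∂τ :=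
          lintegral_mono hadd
  have hstep3 : (ENNReal.ofReal (2 * R))⁻¹ *
      ∫⁻ e, volume {t : ℝ | x + t • (e : EuclideanSpace ℝ (Fin d)) ∈ A'} ∂τ
      ≤ ∫⁻ e, chordMeasure X (↑e) x A ∂τ := by
    calc (ENNReal.ofReal (2 * R))⁻¹ *
        ∫⁻ e, volume {t : ℝ | x + t • (e : EuclideanSpace ℝ (Fin d)) ∈ A'} ∂τ
        = ∫⁻ e, (ENNReal.ofReal (2 * R))⁻¹ *
            volume {t : ℝ | x + t • (e : EuclideanSpace ℝ (Fin d)) ∈ A'} ∂τ :=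
          (lintegral_const_mul' _ _ hinv2R_ne_top).symm
      _ ≤ ∫⁻ e, chordMeasure X (↑e) x A ∂τ :=
          lintegral_mono fun e => chord_lower X hA hA'A hA'X x₀ x hout e
  -- putting everything together
  have hRHS : ∫⁻ e, chordMeasure X (↑e) x A ∂(sphereUniform d)
      = ((d : ℝ≥0∞) * ι)⁻¹ * ∫⁻ e, chordMeasure X (↑e) x A ∂τ := by
    rw [sphereUniform, lintegral_smul_measure, ← hτ, hcuniv, smul_eq_mul]
  have hLHS : ENNReal.ofReal (r ^ d / (d * (R + r) ^ (d - 1) * R)) *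
      ((volume (Metric.closedBall x₀ r))⁻¹ • volume.restrict (Metric.closedBall x₀ r)) A
      = ENNReal.ofReal (r ^ d / (d * (R + r) ^ (d - 1) * R)) *
        ((ENNReal.ofReal (r ^ d) * ι)⁻¹ * volume A') := by
    rw [Measure.smul_apply, Measure.restrict_apply hA, smul_eq_mul,
      Measure.addHaar_closedBall _ _ hr.le, hdim, ← hιdef, ← hA'def]
  rw [hLHS, hRHS, ← mul_assoc, const_calc d hd hr hrR hι0 hιt]
  calc ((d : ℝ≥0∞) * ι)⁻¹ *
      ((ENNReal.ofReal (2 * R))⁻¹ * (2 * (ENNReal.ofReal ((R + r) ^ (d - 1)))⁻¹)) * volume A'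
      = ((d : ℝ≥0∞) * ι)⁻¹ * ((ENNReal.ofReal (2 * R))⁻¹ *
          (2 * ((ENNReal.ofReal ((R + r) ^ (d - 1)))⁻¹ * volume A'))) := by ring
    _ ≤ ((d : ℝ≥0∞) * ι)⁻¹ * ((ENNReal.ofReal (2 * R))⁻¹ * (2 * ∫⁻ e, g e ∂τ)) := by
        exact mul_le_mul_right (mul_le_mul_right (mul_le_mul_right hstep1 _) _) _
    _ ≤ ((d : ℝ≥0∞) * ι)⁻¹ * ((ENNReal.ofReal (2 * R))⁻¹ *
          ∫⁻ e, volume {t : ℝ | x + t • (e : EuclideanSpace ℝ (Fin d)) ∈ A'} ∂τ) :=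
        mul_le_mul_right (mul_le_mul_right hstep2 _) _
    _ ≤ ((d : ℝ≥0∞) * ι)⁻¹ * ∫⁻ e, chordMeasure X (↑e) x A ∂τ :=
        mul_le_mul_right hstep3 _
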